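/- Let g₁(x) = 2·max(x,0) − 4·max(x − 1/2, 0) + 2·max(x − 1, 0) (the hat function) and define g_s by iterated composition g_{s+1} = g₁ ∘ g_s. Then for every s ∈ ℕ, the function g_s restricted to [0,1] is piecewise linear with exactly 2^s pieces: it is affine on each interval [j·2^{−s}, (j+1)·2^{−s}], j = 0,…,2^s − 1, taking the value 0 at points j·2^{−s} with j even and the value 1 at points j·2^{−s} with j odd. -/

import Mathlib

/-- The "hat function" `g₁(x) = 2·max(x,0) − 4·max(x−1/2,0) + 2·max(x−1,0)`. -/
noncomputable def hatg (x : ℝ) : ℝ :=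
  2 * max x 0 - 4 * max (x - 1/2) 0 + 2 * max (x - 1) 0

lemma hatg_left {x : ℝ} (h0 : 0 ≤ x) (h1 : x ≤ 1/2) : hatg x = 2 * x := by
  unfold hatg
  rw [max_eq_left h0, max_eq_right (by linarith), max_eq_right (by linarith)]
  ring

lemma hatg_right {x : ℝ} (h0 : 1/2 ≤ x) (h1 : x ≤ 1) : hatg x = 2 - 2 * x := by
  unfold hatg
  rw [max_eq_left (by linarith), max_eq_left (by linarith), max_eq_right (by linarith)]
  ring

lemma hatg_key (s : ℕ) (hs : 1 ≤ s) : ∀ j : ℕ, j < 2 ^ s →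
    ∀ x ∈ Set.Icc ((j : ℝ) / 2 ^ s) (((j : ℝ) + 1) / 2 ^ s),
      hatg^[s] x = if Even j then 2 ^ s * x - (j : ℝ) else (j : ℝ) + 1 - 2 ^ s * x := by
  induction s, hs using Nat.le_induction with
  | base =>
    intro j hj x hx
    norm_num at hx
    interval_cases j
    · obtain ⟨hx1, hx2⟩ := hx
      rw [Function.iterate_one, hatg_left (by linarith) (by linarith)]
      norm_num
    · obtain ⟨hx1, hx2⟩ := hx
      rw [Function.iterate_one, hatg_right (by linarith) (by linarith)]
      norm_num
  | succ s hs ih =>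
    intro j hj x hx
    obtain ⟨hx1, hx2⟩ := hx
    have hP : (0:ℝ) < 2 ^ s := by positivity
    have hpow : (2:ℝ) ^ (s+1) = 2 * 2 ^ s := by ring
    rw [Function.iterate_succ_apply]
    by_cases hcase : j < 2 ^ s
    · have hjR : (j:ℝ) + 1 ≤ 2 ^ s := by
        have : (j:ℕ) + 1 ≤ 2 ^ s := hcase
        exact_mod_cast this
      have hx0 : 0 ≤ x := le_trans (by positivity) hx1
      have hxh : x ≤ 1/2 := by
        have := hx2
        rw [hpow, le_div_iff₀ (by positivity)] at this
        nlinarith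
      have e1 : (j:ℝ) / 2 ^ s = 2 * ((j:ℝ) / 2 ^ (s+1)) := by rw [hpow]; ring
      have e2 : ((j:ℝ)+1) / 2 ^ s = 2 * (((j:ℝ)+1) / 2 ^ (s+1)) := by rw [hpow]; ring
      have hmem : 2 * x ∈ Set.Icc ((j:ℝ) / 2 ^ s) (((j:ℝ)+1) / 2 ^ s) :=
        ⟨by rw [e1]; linarith, by rw [e2]; linarith⟩
      rw [hatg_left hx0 hxh, ih j hcase (2*x) hmem, hpow]
      split_ifs <;> ring
    · push_neg at hcase
      have h2 : 2 ^ (s+1) = 2 * 2 ^ s := by ring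
      set j' := 2 ^ (s+1) - 1 - j with hj'def
      have hj'lt : j' < 2 ^ s := by omega
      have hsum : j' + 1 + j = 2 ^ (s+1) := by omega
      have hsumR : (j':ℝ) + 1 + (j:ℝ) = 2 * 2 ^ s := by
        have : ((j':ℕ):ℝ) + 1 + (j:ℝ) = ((2 ^ (s+1) : ℕ) : ℝ) := by exact_mod_cast hsum
        rw [this]; push_cast; ring
      have hjR : (2:ℝ) ^ s ≤ (j:ℝ) := by exact_mod_cast hcase
      have hl : (j:ℝ) ≤ x * (2 * 2 ^ s) := by
        rw [hpow, div_le_iff₀ (by positivity)] at hx1; linarith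
      have hu : x * (2 * 2 ^ s) ≤ (j:ℝ) + 1 := by
        rw [hpow, le_div_iff₀ (by positivity)] at hx2; linarith
      have hxh : 1/2 ≤ x := by nlinarith
      have hx1' : x ≤ 1 := by
        have : (j:ℝ) + 1 ≤ 2 * 2 ^ s := by
          have : (j:ℕ) + 1 ≤ 2 ^ (s+1) := hj
          calc (j:ℝ) + 1 ≤ ((2 ^ (s+1) : ℕ) : ℝ) := by exact_mod_cast this
          _ = 2 * 2 ^ s := by push_cast; ring
        nlinarith
      have hmem : 2 - 2 * x ∈ Set.Icc ((j':ℝ) / 2 ^ s) (((j':ℝ)+1) / 2 ^ s) := by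
        constructor
        · rw [div_le_iff₀ hP]; nlinarith
        · rw [le_div_iff₀ hP]; nlinarith
      rw [hatg_right hxh hx1', ih j' hj'lt _ hmem]
      rcases Nat.even_or_odd j with he | ho
      · have h1 : ¬ Even j' := by
          simp only [Nat.even_iff] at he ⊢
          omega
        rw [if_neg h1, if_pos he, hpow]
        nlinarith
      · have h1 : Even j' := by
          simp only [Nat.even_iff]
          simp only [Nat.odd_iff] at ho
          omega
        have h0 : ¬ Even j := by
          simp only [Nat.even_iff]
          simp only [Nat.odd_iff] at ho
          omega
        rw [if_pos h1, if_neg h0, hpow]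
        nlinarith

/-- For every `s ≥ 1`, the `s`-fold composition `g_s` of the hat function is, on `[0,1]`,
piecewise linear with `2^s` pieces: it is affine on each dyadic interval
`[j·2^{−s}, (j+1)·2^{−s}]`, takes the value `0` at grid points `j·2^{−s}` with `j` even,
and the value `1` at grid points with `j` odd. -/
theorem stmt14 (s : ℕ) (hs : 1 ≤ s) :
    (∀ j : ℕ, j < 2 ^ s → ∃ c d : ℝ,
      ∀ x ∈ Set.Icc ((j : ℝ) / 2 ^ s) (((j : ℝ) + 1) / 2 ^ s),
        hatg^[s] x = c * x + d) ∧
    (∀ j : ℕ, j ≤ 2 ^ s →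
      (Even j → hatg^[s] ((j : ℝ) / 2 ^ s) = 0) ∧
      (Odd j → hatg^[s] ((j : ℝ) / 2 ^ s) = 1)) := by
  have hP : (0:ℝ) < 2 ^ s := by positivity
  constructor
  · intro j hj
    by_cases hev : Even j
    · refine ⟨2 ^ s, -(j:ℝ), fun x hx => ?_⟩
      rw [hatg_key s hs j hj x hx, if_pos hev]; ring
    · refine ⟨-(2 ^ s), (j:ℝ) + 1, fun x hx => ?_⟩
      rw [hatg_key s hs j hj x hx, if_neg hev]; ring
  · intro j hj
    constructor
    · intro hev
      by_cases hlt : j < 2 ^ s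
      · have hx : (j:ℝ)/2^s ∈ Set.Icc ((j:ℝ)/2^s) (((j:ℝ)+1)/2^s) :=
          ⟨le_rfl, by rw [div_le_div_iff₀ hP hP]; nlinarith⟩
        rw [hatg_key s hs j hlt _ hx, if_pos hev]
        field_simp; ring
      · have hje : j = 2 ^ s := by omega
        have h1 : 1 ≤ 2 ^ s := Nat.one_le_two_pow
        set j'' := 2 ^ s - 1 with hj''
        have hj''lt : j'' < 2 ^ s := by omega
        have hc : ((j'':ℕ):ℝ) + 1 = 2 ^ s := by
          have : j'' + 1 = 2 ^ s := by omega
          calc ((j'':ℕ):ℝ) + 1 = ((j'' + 1 : ℕ) : ℝ) := by push_cast; ring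
          _ = ((2 ^ s : ℕ) : ℝ) := by rw [this]
          _ = 2 ^ s := by push_cast; ring
        have hjcast : (j:ℝ) = 2 ^ s := by rw [hje]; push_cast; ring
        have ht : (j:ℝ)/2^s = 1 := by rw [hjcast]; field_simp
        have hodd : ¬ Even j'' := by
          have : Even (2 ^ s) := (Nat.even_pow).mpr ⟨even_two, by omega⟩
          simp only [Nat.even_iff] at this ⊢
          omega
        have hx : (j:ℝ)/2^s ∈ Set.Icc ((j'':ℝ)/2^s) (((j'':ℝ)+1)/2^s) := by
          constructor
          · rw [ht, div_le_one hP]; nlinarith [hc]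
          · rw [ht, hc]; rw [div_self (ne_of_gt hP)]
        rw [hatg_key s hs j'' hj''lt _ hx, if_neg hodd, ht]
        linarith [hc]
    · intro ho
      have hne : j ≠ 2 ^ s := by
        intro h
        have : Even (2 ^ s) := (Nat.even_pow).mpr ⟨even_two, by omega⟩
        rw [← h] at this
        exact (Nat.not_odd_iff_even.mpr this) ho
      have hlt : j < 2 ^ s := by omega
      have hx : (j:ℝ)/2^s ∈ Set.Icc ((j:ℝ)/2^s) (((j:ℝ)+1)/2^s) :=
        ⟨le_rfl, by rw [div_le_div_iff₀ hP hP]; nlinarith⟩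
      have hnev : ¬ Even j := by
        simp only [Nat.even_iff]; simp only [Nat.odd_iff] at ho; omega
      rw [hatg_key s hs j hlt _ hx, if_neg hnev]
      have : (2:ℝ)^s * ((j:ℝ)/2^s) = (j:ℝ) := by field_simp
      rw [this]; ring
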